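/- arXiv:1709.00589 — 2 statements merged into one kernel-verified Lean document; each statement's English description precedes it below -/
import Mathlib

section
/- Let G be a finite simple graph of diameter 2. If G contains two vertices u and v belonging to a diametrical triple of G such that the subgraph of G induced by Ecc_G(u) ∩ Ecc_G(v) has minimum degree 0 (i.e., contains an isolated vertex), then θ_3(G) = 3. -/
namespace AscPaper

open SimpleGraph

/-- The eccentricity of a vertex `u` in a graph `G`, as an extended natural number:
the supremum of distances from `u` to all vertices. -/
noncomputable def ecc {V : Type*} (G : SimpleGraph V) (u : V) : ℕ∞ :=
  ⨆ v, G.edist u v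

/-- The radius of a graph: the minimum eccentricity over all vertices. -/
noncomputable def graphRadius {V : Type*} (G : SimpleGraph V) : ℕ∞ :=
  ⨅ u, ecc G u

/-- The diameter of a graph: the maximum eccentricity over all vertices. -/
noncomputable def graphDiam {V : Type*} (G : SimpleGraph V) : ℕ∞ :=
  ⨆ u, ecc G u

/-- The eccentric set of `u`: all vertices at distance exactly `ecc G u` from `u`. -/
def eccSet {V : Type*} (G : SimpleGraph V) (u : V) : Set V :=
  {v | G.edist u v = ecc G u}

/-- `H` is an `r`-ASC (almost self-centered) graph: `H` is connected, has radius `r`,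
and all but exactly two vertices are central (have eccentricity equal to the radius). -/
def IsASC {V : Type*} (r : ℕ) (H : SimpleGraph V) : Prop :=
  H.Connected ∧ graphRadius H = (r : ℕ∞) ∧
    {u : V | ecc H u ≠ graphRadius H}.ncard = 2

/-- The `r`-ASC index of a graph `G`: the minimum number `k` of vertices that need to be
added to `G` so that the resulting graph is an `r`-ASC graph containing `G` as an
induced subgraph. -/
noncomputable def theta {V : Type*} (r : ℕ) (G : SimpleGraph V) : ℕ :=
  sInf {k : ℕ | ∃ H : SimpleGraph (V ⊕ Fin k), IsASC r H ∧
    ∀ u v : V, H.Adj (Sum.inl u) (Sum.inl v) ↔ G.Adj u v}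

/-! ### Auxiliary lemmas about `edist` -/

section EdistHelpers
variable {W : Type*} {G : SimpleGraph W} {a b m n o : W}

lemma hle2 (h1 : G.Adj a m) (h2 : G.Adj m b) : G.edist a b ≤ 2 := by
  have := G.edist_le (Walk.cons h1 (Walk.cons h2 Walk.nil))
  simpa using this

lemma hle3 (h1 : G.Adj a m) (h2 : G.Adj m n) (h3 : G.Adj n b) : G.edist a b ≤ 3 := by
  have := G.edist_le (Walk.cons h1 (Walk.cons h2 (Walk.cons h3 Walk.nil)))
  simpa using this

lemma hle4 (h1 : G.Adj a m) (h2 : G.Adj m n) (h3 : G.Adj n o) (h4 : G.Adj o b) :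
    G.edist a b ≤ 4 := by
  have := G.edist_le (Walk.cons h1 (Walk.cons h2 (Walk.cons h3 (Walk.cons h4 Walk.nil))))
  simpa using this

lemma htri (h : G.Adj a m) : G.edist a b ≤ G.edist m b + 1 := by
  calc G.edist a b ≤ G.edist a m + G.edist m b := SimpleGraph.edist_triangle
  _ ≤ 1 + G.edist m b := by
      gcongr
      exact le_of_eq (edist_eq_one_iff_adj.mpr h)
  _ = G.edist m b + 1 := by ring

lemma hnotadj (h : G.edist a b = 2) : ¬ G.Adj a b := by
  intro hadj
  have := edist_eq_one_iff_adj.mpr hadj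
  rw [h] at this
  norm_num at this

lemma hne2 (h : G.edist a b = 2) : a ≠ b := by
  intro he; subst he; simp [edist_self] at h

lemma hmid (h : G.edist a b = 2) : ∃ m, G.Adj a m ∧ G.Adj m b := by
  obtain ⟨p, hp⟩ := exists_walk_of_edist_eq_coe (k := 2) h
  match p, hp with
  | Walk.cons h1 (Walk.cons h2 Walk.nil), _ => exact ⟨_, h1, h2⟩
  | Walk.nil, hp => simp at hp
  | Walk.cons h1 Walk.nil, hp => simp at hp
  | Walk.cons h1 (Walk.cons h2 (Walk.cons h3 q)), hp => simp [Walk.length_cons] at hp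

lemma heq2 (hle : G.edist a b ≤ 2) (hne : a ≠ b) (hnadj : ¬ G.Adj a b) : G.edist a b = 2 := by
  have h0 : G.edist a b ≠ 0 := by simp [edist_eq_zero_iff, hne]
  have h1 : G.edist a b ≠ 1 := by simp [edist_eq_one_iff_adj, hnadj]
  have hnt : G.edist a b ≠ ⊤ := fun h => by rw [h] at hle; exact absurd hle (by norm_num)
  lift G.edist a b to ℕ using hnt with d hd
  norm_cast at *
  omega

lemma h3le (hne : a ≠ b) (hnadj : ¬ G.Adj a b)
    (h2 : ∀ m, G.Adj a m → ¬ G.Adj m b) : 3 ≤ G.edist a b := by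
  rw [edist_eq_sInf]
  refine le_sInf ?_
  rintro _ ⟨p, rfl⟩
  show (3:ℕ∞) ≤ (p.length : ℕ∞)
  suffices h : 3 ≤ p.length by exact_mod_cast h
  by_contra hlt
  push_neg at hlt
  match p, hlt with
  | Walk.nil, _ => exact hne rfl
  | Walk.cons h Walk.nil, _ => exact hnadj h
  | Walk.cons h (Walk.cons h' Walk.nil), _ => exact h2 _ h h'
  | Walk.cons h (Walk.cons h' (Walk.cons h'' q)), hlt =>
      revert hlt; simp only [Walk.length_cons]; omega

lemma h4le (hne : a ≠ b) (hnadj : ¬ G.Adj a b)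
    (h2 : ∀ m, G.Adj a m → ¬ G.Adj m b)
    (h3 : ∀ m n, G.Adj a m → G.Adj m n → ¬ G.Adj n b) : 4 ≤ G.edist a b := by
  rw [edist_eq_sInf]
  refine le_sInf ?_
  rintro _ ⟨p, rfl⟩
  show (4:ℕ∞) ≤ (p.length : ℕ∞)
  suffices h : 4 ≤ p.length by exact_mod_cast h
  by_contra hlt
  push_neg at hlt
  match p, hlt with
  | Walk.nil, _ => exact hne rfl
  | Walk.cons h Walk.nil, _ => exact hnadj h
  | Walk.cons h (Walk.cons h' Walk.nil), _ => exact h2 _ h h'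
  | Walk.cons h (Walk.cons h' (Walk.cons h'' Walk.nil)), _ => exact h3 _ _ h h' h''
  | Walk.cons h (Walk.cons h' (Walk.cons h'' (Walk.cons h''' q))), hlt =>
      revert hlt; simp only [Walk.length_cons]; omega

lemma ecc_eq {p : W} {k : ℕ∞} (hub : ∀ q, G.edist p q ≤ k) (q0 : W)
    (hwit : G.edist p q0 = k) : ecc G p = k :=
  le_antisymm (iSup_le hub) (hwit ▸ le_iSup (G.edist p) q0)

end EdistHelpers

/-! ### The construction -/

/-- auxiliary predicate: `a` is in `Ecc(u) ∩ Ecc(v)` minus `x` (for diameter-2 graphs). -/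
def TP {V : Type*} (G : SimpleGraph V) (u v x a : V) : Prop :=
  a ≠ x ∧ G.edist u a = 2 ∧ G.edist v a = 2

/-- The graph `H` obtained from `G` by adding three vertices `z1 = inr 0, z2 = inr 1,
`z3 = inr 2`, with `z1 ~ u`, `z2 ~ v`, `z2 ~ t` for `t ∈ T`, `z1 ~ z3`, `z2 ~ z3`. -/
def HH {V : Type*} (G : SimpleGraph V) (u v x : V) : SimpleGraph (V ⊕ Fin 3) where
  Adj p q := match p, q with
    | .inl a, .inl b => G.Adj a b
    | .inl a, .inr i => (i = 0 ∧ a = u) ∨ (i = 1 ∧ (a = v ∨ TP G u v x a))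
    | .inr i, .inl a => (i = 0 ∧ a = u) ∨ (i = 1 ∧ (a = v ∨ TP G u v x a))
    | .inr i, .inr j => (i = 0 ∧ j = 2) ∨ (i = 2 ∧ j = 0) ∨ (i = 1 ∧ j = 2) ∨ (i = 2 ∧ j = 1)
  symm := by constructor; rintro (a|i) (b|j) h <;> first | exact h.symm | tauto
  loopless := by
    constructor; rintro (a|i) h
    · exact G.loopless.irrefl a h
    · fin_cases i <;> simp_all

section HHlemmas
variable {V : Type*} {G : SimpleGraph V} {u v x a b : V} {i j : Fin 3}

lemma HH_inl_inl : (HH G u v x).Adj (.inl a) (.inl b) ↔ G.Adj a b := Iff.rfl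

lemma HH_inl_inr :
    (HH G u v x).Adj (.inl a) (.inr i) ↔
      (i = 0 ∧ a = u) ∨ (i = 1 ∧ (a = v ∨ TP G u v x a)) := Iff.rfl

lemma HH_inl_z1 : (HH G u v x).Adj (.inl a) (.inr 0) ↔ a = u := by
  show (((0:Fin 3) = 0 ∧ _) ∨ ((0:Fin 3) = 1 ∧ _)) ↔ _
  simp

lemma HH_inl_z2 : (HH G u v x).Adj (.inl a) (.inr 1) ↔ (a = v ∨ TP G u v x a) := by
  show (((1:Fin 3) = 0 ∧ _) ∨ ((1:Fin 3) = 1 ∧ _)) ↔ _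
  simp

lemma HH_inl_z3 : ¬ (HH G u v x).Adj (.inl a) (.inr 2) := by
  show ¬ (((2:Fin 3) = 0 ∧ _) ∨ ((2:Fin 3) = 1 ∧ _))
  simp

lemma HH_z1_z2 : ¬ (HH G u v x).Adj (.inr 0) (.inr 1) := by
  show ¬ _
  simp only [HH]
  decide

lemma HH_z1_z3 : (HH G u v x).Adj (.inr 0) (.inr 2) := by
  show ((0:Fin 3) = 0 ∧ (2:Fin 3) = 2) ∨ _
  left; exact ⟨rfl, rfl⟩

lemma HH_z2_z3 : (HH G u v x).Adj (.inr 1) (.inr 2) := by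
  show _ ∨ _
  right; right; left; exact ⟨rfl, rfl⟩

end HHlemmas

/-! ### The upper bound: `HH` is a 3-ASC graph -/

lemma HH_isASC {V : Type*} (G : SimpleGraph V) (u v x : V)
    (all2 : ∀ a b, G.edist a b ≤ 2)
    (euv : G.edist u v = 2) (eux : G.edist u x = 2) (evx : G.edist v x = 2)
    (hiso : ∀ y, G.edist u y = 2 → G.edist v y = 2 → ¬ G.Adj x y) :
    IsASC 3 (HH G u v x) := by
  set H := HH G u v x with hHdef
  have nuv : ¬ G.Adj u v := hnotadj euv
  have nux : ¬ G.Adj u x := hnotadj eux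
  have nvx : ¬ G.Adj v x := hnotadj evx
  have neuv : u ≠ v := hne2 euv
  have neux : u ≠ x := hne2 eux
  have nevx : v ≠ x := hne2 evx
  have nTx : ¬ TP G u v x x := fun h => h.1 rfl
  have nTu : ¬ TP G u v x u := fun h => by
    have := h.2.1; rw [SimpleGraph.edist_self] at this; norm_num at this
  have nTv : ¬ TP G u v x v := fun h => by
    have := h.2.2; rw [SimpleGraph.edist_self] at this; norm_num at this
  -- facts about elements of T
  have tne_u : ∀ t, TP G u v x t → t ≠ u := fun t h => (hne2 h.2.1).symm
  have tne_v : ∀ t, TP G u v x t → t ≠ v := fun t h => (hne2 h.2.2).symm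
  have tnadj_u : ∀ t, TP G u v x t → ¬ G.Adj t u := fun t h hadj =>
    (hnotadj h.2.1) hadj.symm
  have tnadj_v : ∀ t, TP G u v x t → ¬ G.Adj t v := fun t h hadj =>
    (hnotadj h.2.2) hadj.symm
  have tnadj_x : ∀ t, TP G u v x t → ¬ G.Adj x t := fun t h => hiso t h.2.1 h.2.2
  -- adjacency shortcuts
  have hz1u : H.Adj (Sum.inl u) (Sum.inr 0) := HH_inl_z1.mpr rfl
  have hz2v : H.Adj (Sum.inl v) (Sum.inr 1) := HH_inl_z2.mpr (Or.inl rfl)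
  have hz2t : ∀ t, TP G u v x t → H.Adj (Sum.inl t) (Sum.inr 1) :=
    fun t ht => HH_inl_z2.mpr (Or.inr ht)
  -- distances within G are preserved (bounded by 2)
  have L1 : ∀ a b : V, H.edist (Sum.inl a) (Sum.inl b) ≤ 2 := by
    intro a b
    by_cases hab : a = b
    · subst hab; exact le_trans (le_of_eq (SimpleGraph.edist_self ..)) (by norm_num)
    by_cases hadj : G.Adj a b
    · exact le_trans (le_of_eq (edist_eq_one_iff_adj.mpr (HH_inl_inl.mpr hadj))) (by norm_num)
    · obtain ⟨m, hm1, hm2⟩ := hmid (heq2 (all2 a b) hab hadj)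
      exact hle2 (HH_inl_inl.mpr hm1) (HH_inl_inl.mpr hm2)
  -- generic upper bounds to the new vertices
  have L2 : ∀ a : V, H.edist (Sum.inl a) (Sum.inr 0) ≤ 3 := by
    intro a
    calc H.edist (Sum.inl a) (Sum.inr 0) = H.edist (Sum.inr 0) (Sum.inl a) := SimpleGraph.edist_comm ..
    _ ≤ H.edist (Sum.inl u) (Sum.inl a) + 1 := htri hz1u.symm
    _ ≤ 2 + 1 := by gcongr; exact L1 u a
    _ = 3 := by norm_num
  have L2' : ∀ a : V, H.edist (Sum.inl a) (Sum.inr 1) ≤ 3 := by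
    intro a
    calc H.edist (Sum.inl a) (Sum.inr 1) = H.edist (Sum.inr 1) (Sum.inl a) := SimpleGraph.edist_comm ..
    _ ≤ H.edist (Sum.inl v) (Sum.inl a) + 1 := htri hz2v.symm
    _ ≤ 2 + 1 := by gcongr; exact L1 v a
    _ = 3 := by norm_num
  have L3 : ∀ a : V, H.edist (Sum.inl a) (Sum.inr 2) ≤ 4 := by
    intro a
    calc H.edist (Sum.inl a) (Sum.inr 2) = H.edist (Sum.inr 2) (Sum.inl a) := SimpleGraph.edist_comm ..
    _ ≤ H.edist (Sum.inr 0) (Sum.inl a) + 1 := htri HH_z1_z3.symm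
    _ = H.edist (Sum.inl a) (Sum.inr 0) + 1 := by rw [SimpleGraph.edist_comm]
    _ ≤ 3 + 1 := by gcongr; exact L2 a
    _ = 4 := by norm_num
  -- exact distance to z1
  have Lz1eq : ∀ c : V, c ≠ u → ¬ G.Adj c u → H.edist (Sum.inl c) (Sum.inr 0) = 3 := by
    intro c hcu hadj
    refine le_antisymm (L2 c) (h3le (by simp) ?_ ?_)
    · rw [HH_inl_z1]; exact hcu
    · rintro (b | i) hm hmz
      · exact hadj (by rw [HH_inl_z1] at hmz; exact hmz ▸ hm)
      · rcases HH_inl_inr.mp hm with ⟨hi, rfl⟩ | ⟨hi, hc⟩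
        · exact hcu rfl
        · subst hi
          exact absurd hmz.symm HH_z1_z2
  -- exact distance to z2
  have Lz2eq : ∀ c : V, c ≠ v → ¬ G.Adj c v → ¬ TP G u v x c →
      (∀ t, TP G u v x t → ¬ G.Adj c t) → H.edist (Sum.inl c) (Sum.inr 1) = 3 := by
    intro c hcv hadj hTc hct
    have hub : H.edist (Sum.inl c) (Sum.inr 1) ≤ 3 := L2' c
    refine le_antisymm hub (h3le (by simp) ?_ ?_)
    · rw [HH_inl_z2]
      rintro (rfl | hT)
      · exact hcv rfl
      · exact hTc hT
    · rintro (b | i) hm hmz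
      · rcases HH_inl_z2.mp hmz with rfl | hT
        · exact hadj hm
        · exact hct b hT hm
      · rcases HH_inl_inr.mp hm with ⟨hi, rfl⟩ | ⟨hi, hc⟩
        · subst hi
          exact absurd hmz HH_z1_z2
        · subst hi
          exact H.irrefl hmz
  -- exact distance from x to z3
  have E_xz3 : H.edist (Sum.inl x) (Sum.inr 2) = 4 := by
    have hnadjx : ∀ i : Fin 3, ¬ H.Adj (Sum.inl x) (Sum.inr i) := by
      intro i hi
      rcases HH_inl_inr.mp hi with ⟨hi0, rfl⟩ | ⟨hi1, rfl | hT⟩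
      · exact neux rfl
      · exact nevx rfl
      · exact nTx hT
    have hub : H.edist (Sum.inl x) (Sum.inr 2) ≤ 4 := by
      obtain ⟨m, hm1, hm2⟩ := hmid (SimpleGraph.edist_comm (u := v) ▸ evx)
      exact hle4 (HH_inl_inl.mpr hm1) (HH_inl_inl.mpr hm2) hz2v HH_z2_z3
    refine le_antisymm hub (h4le (by simp) HH_inl_z3 ?_ ?_)
    · rintro (b | i) hm
      · exact HH_inl_z3
      · exact absurd hm (hnadjx i)
    · rintro (b | i) (c | j) hm hmn
      · exact HH_inl_z3
      · rcases HH_inl_inr.mp hmn with ⟨hj, hb⟩ | ⟨hj, hb | hT⟩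
        · subst hj; intro _
          have hm' : G.Adj x b := hm
          rw [hb] at hm'; exact nux hm'.symm
        · subst hj; intro _
          have hm' : G.Adj x b := hm
          rw [hb] at hm'; exact nvx hm'.symm
        · subst hj; intro _; exact tnadj_x b hT hm
      · exact absurd hm (hnadjx i)
      · exact absurd hm (hnadjx i)
  -- exact distance to z3 for "other" vertices
  have Lz3eq : ∀ c : V, c ≠ u → c ≠ v → ¬ TP G u v x c → (G.Adj u c ∨ G.Adj v c) →
      H.edist (Sum.inl c) (Sum.inr 2) = 3 := by
    intro c hcu hcv hTc hadj
    have hub : H.edist (Sum.inl c) (Sum.inr 2) ≤ 3 := by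
      rcases hadj with h | h
      · exact hle3 (HH_inl_inl.mpr h.symm) hz1u HH_z1_z3
      · exact hle3 (HH_inl_inl.mpr h.symm) hz2v HH_z2_z3
    refine le_antisymm hub (h3le (by simp) HH_inl_z3 ?_)
    rintro (b | i) hm hmz
    · exact HH_inl_z3 hmz
    · rcases HH_inl_inr.mp hm with ⟨hi, rfl⟩ | ⟨hi, rfl | hT⟩
      · exact hcu rfl
      · exact hcv rfl
      · exact hTc hT
  -- classification: vertices other than u, v, x, T are adjacent to u or v
  have hclass : ∀ c : V, c ≠ u → c ≠ v → c ≠ x → ¬ TP G u v x c →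
      (G.Adj u c ∨ G.Adj v c) := by
    intro c hcu hcv hcx hTc
    by_cases h1 : G.Adj u c
    · exact Or.inl h1
    by_cases h2 : G.Adj v c
    · exact Or.inr h2
    exact absurd ⟨hcx, heq2 (all2 u c) (Ne.symm hcu) h1,
      heq2 (all2 v c) (Ne.symm hcv) h2⟩ hTc
  -- eccentricities
  have ecc_u : ecc H (Sum.inl u) = 3 := by
    refine ecc_eq ?_ (Sum.inr 1)
      (Lz2eq u neuv nuv nTu (fun t ht => fun h => tnadj_u t ht h.symm))
    rintro (b | i)
    · exact le_trans (L1 u b) (by norm_num)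
    · fin_cases i
      · exact le_trans (L2 u) (by norm_num)
      · exact L2' u
      · exact le_trans (hle2 hz1u HH_z1_z3) (by norm_num)
  have ecc_v : ecc H (Sum.inl v) = 3 := by
    refine ecc_eq ?_ (Sum.inr 0) (Lz1eq v (Ne.symm neuv) (fun h => nuv h.symm))
    rintro (b | i)
    · exact le_trans (L1 v b) (by norm_num)
    · fin_cases i
      · exact L2 v
      · exact le_trans (L2' v) le_rfl
      · exact le_trans (hle2 hz2v HH_z2_z3) (by norm_num)
  have ecc_t : ∀ t, TP G u v x t → ecc H (Sum.inl t) = 3 := by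
    intro t ht
    refine ecc_eq ?_ (Sum.inr 0) (Lz1eq t (tne_u t ht) (tnadj_u t ht))
    rintro (b | i)
    · exact le_trans (L1 t b) (by norm_num)
    · fin_cases i
      · exact L2 t
      · exact L2' t
      · exact le_trans (hle2 (hz2t t ht) HH_z2_z3) (by norm_num)
  have ecc_other : ∀ c : V, c ≠ u → c ≠ v → c ≠ x → ¬ TP G u v x c →
      ecc H (Sum.inl c) = 3 := by
    intro c hcu hcv hcx hTc
    refine ecc_eq ?_ (Sum.inr 2) (Lz3eq c hcu hcv hTc (hclass c hcu hcv hcx hTc))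
    rintro (b | i)
    · exact le_trans (L1 c b) (by norm_num)
    · fin_cases i
      · exact L2 c
      · exact L2' c
      · exact le_of_eq (Lz3eq c hcu hcv hTc (hclass c hcu hcv hcx hTc))
  have ecc_x : ecc H (Sum.inl x) = 4 := by
    refine ecc_eq ?_ (Sum.inr 2) E_xz3
    rintro (b | i)
    · exact le_trans (L1 x b) (by norm_num)
    · fin_cases i
      · exact le_trans (L2 x) (by norm_num)
      · exact le_trans (L2' x) (by norm_num)
      · exact le_of_eq E_xz3
  have ecc_z1 : ecc H (Sum.inr 0) = 3 := by
    refine ecc_eq ?_ (Sum.inl x)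
      ((SimpleGraph.edist_comm ..).trans (Lz1eq x (Ne.symm neux) (fun h => nux h.symm)))
    rintro (b | i)
    · exact le_trans ((SimpleGraph.edist_comm ..).le.trans (L2 b)) le_rfl
    · fin_cases i
      · exact le_trans (le_of_eq (SimpleGraph.edist_self ..)) (by norm_num)
      · exact le_trans (hle2 HH_z1_z3 HH_z2_z3.symm) (by norm_num)
      · exact le_trans (le_of_eq (edist_eq_one_iff_adj.mpr HH_z1_z3)) (by norm_num)
  have ecc_z2 : ecc H (Sum.inr 1) = 3 := by
    refine ecc_eq ?_ (Sum.inl x)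
      ((SimpleGraph.edist_comm ..).trans (Lz2eq x (Ne.symm nevx) (fun h => nvx h.symm) nTx
        (fun t ht => tnadj_x t ht)))
    rintro (b | i)
    · exact (SimpleGraph.edist_comm ..).le.trans (L2' b)
    · fin_cases i
      · exact le_trans (hle2 HH_z2_z3 HH_z1_z3.symm) (by norm_num)
      · exact le_trans (le_of_eq (SimpleGraph.edist_self ..)) (by norm_num)
      · exact le_trans (le_of_eq (edist_eq_one_iff_adj.mpr HH_z2_z3)) (by norm_num)
  have ecc_z3 : ecc H (Sum.inr 2) = 4 := by
    refine ecc_eq ?_ (Sum.inl x) ((SimpleGraph.edist_comm ..).trans E_xz3)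
    rintro (b | i)
    · exact (SimpleGraph.edist_comm ..).le.trans (L3 b)
    · fin_cases i
      · exact le_trans (le_of_eq (edist_eq_one_iff_adj.mpr HH_z1_z3.symm)) (by norm_num)
      · exact le_trans (le_of_eq (edist_eq_one_iff_adj.mpr HH_z2_z3.symm)) (by norm_num)
      · exact le_trans (le_of_eq (SimpleGraph.edist_self ..)) (by norm_num)
  -- all eccentricities are ≤ 4
  have eccle4 : ∀ p, ecc H p ≤ 4 := by
    rintro (c | i)
    · by_cases hcx : c = x
      · subst hcx; rw [ecc_x]
      by_cases hcu : c = u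
      · subst hcu; rw [ecc_u]; norm_num
      by_cases hcv : c = v
      · subst hcv; rw [ecc_v]; norm_num
      by_cases hT : TP G u v x c
      · rw [ecc_t c hT]; norm_num
      · rw [ecc_other c hcu hcv hcx hT]; norm_num
    · fin_cases i
      · exact le_trans (le_of_eq ecc_z1) (by norm_num)
      · exact le_trans (le_of_eq ecc_z2) (by norm_num)
      · exact le_of_eq ecc_z3
  have ecc_ge3 : ∀ p, (3:ℕ∞) ≤ ecc H p := by
    rintro (c | i)
    · by_cases hcx : c = x
      · subst hcx; rw [ecc_x]; norm_num
      by_cases hcu : c = u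
      · subst hcu; rw [ecc_u]
      by_cases hcv : c = v
      · subst hcv; rw [ecc_v]
      by_cases hT : TP G u v x c
      · rw [ecc_t c hT]
      · rw [ecc_other c hcu hcv hcx hT]
    · fin_cases i
      · exact ecc_z1.ge
      · exact ecc_z2.ge
      · exact le_trans (by norm_num) ecc_z3.ge
  have hrad : graphRadius H = 3 := by
    refine le_antisymm ?_ (le_iInf ecc_ge3)
    exact le_trans (iInf_le _ (Sum.inr 0)) (le_of_eq ecc_z1)
  refine ⟨?_, by exact_mod_cast hrad, ?_⟩
  · constructor
    intro p q
    apply reachable_of_edist_ne_top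
    intro htop
    have : (⊤ : ℕ∞) ≤ 4 := htop ▸ le_trans (le_iSup (H.edist p) q) (eccle4 p)
    exact absurd this (by norm_num)
  · have hset : {p : V ⊕ Fin 3 | ecc H p ≠ graphRadius H} = {Sum.inl x, Sum.inr 2} := by
      ext p
      simp only [Set.mem_setOf_eq, hrad, Set.mem_insert_iff, Set.mem_singleton_iff]
      constructor
      · intro hne
        rcases p with c | i
        · by_cases hcx : c = x
          · exact Or.inl (by rw [hcx])
          by_cases hcu : c = u
          · exact absurd (hcu ▸ ecc_u) hne
          by_cases hcv : c = v
          · exact absurd (hcv ▸ ecc_v) hne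
          by_cases hT : TP G u v x c
          · exact absurd (ecc_t c hT) hne
          · exact absurd (ecc_other c hcu hcv hcx hT) hne
        · fin_cases i
          · exact absurd ecc_z1 hne
          · exact absurd ecc_z2 hne
          · exact Or.inr rfl
      · rintro (rfl | rfl)
        · rw [ecc_x]; norm_num
        · rw [ecc_z3]; norm_num
    rw [hset]
    exact Set.ncard_pair (by simp)

/-! ### The lower bound: fewer than 3 added vertices is impossible -/

lemma no_small {V : Type*} (G : SimpleGraph V) (u0 : V)
    (all2 : ∀ a b, G.edist a b ≤ 2) {k : ℕ} (hk : k < 3)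
    (H : SimpleGraph (V ⊕ Fin k)) (hasc : IsASC 3 H)
    (hind : ∀ a b : V, H.Adj (Sum.inl a) (Sum.inl b) ↔ G.Adj a b) : False := by
  have hrad : graphRadius H = 3 := by exact_mod_cast hasc.2.1
  have hecc3 : ∀ p, (3:ℕ∞) ≤ ecc H p := fun p =>
    le_trans (le_of_eq hrad.symm) (iInf_le _ p)
  have L1 : ∀ a b : V, H.edist (Sum.inl a) (Sum.inl b) ≤ 2 := by
    intro a b
    by_cases hab : a = b
    · subst hab; rw [SimpleGraph.edist_self]; norm_num
    by_cases hadj : G.Adj a b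
    · exact le_trans (le_of_eq (edist_eq_one_iff_adj.mpr ((hind a b).mpr hadj))) (by norm_num)
    · obtain ⟨m, hm1, hm2⟩ := hmid (heq2 (all2 a b) hab hadj)
      exact hle2 ((hind a m).mpr hm1) ((hind m b).mpr hm2)
  have small : ∀ a : V, (∀ q, H.edist (Sum.inl a) q ≤ 2) → False := by
    intro a h
    have h32 : (3:ℕ∞) ≤ 2 := le_trans (hecc3 (Sum.inl a)) (iSup_le h)
    norm_num at h32
  have getnb : ∀ i : Fin k, ∃ m, H.Adj (Sum.inr i) m := by
    intro i
    obtain ⟨w⟩ := hasc.1.preconnected (Sum.inr i) (Sum.inl u0)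
    cases w with
    | cons h p => exact ⟨_, h⟩
  interval_cases k
  · -- k = 0
    apply small u0
    rintro (b | i)
    · exact L1 u0 b
    · exact i.elim0
  · -- k = 1
    obtain ⟨m, hm⟩ := getnb 0
    rcases m with a | i
    · apply small a
      rintro (b | j)
      · exact L1 a b
      · have hj : j = 0 := Subsingleton.elim j 0
        subst hj
        exact le_trans (le_of_eq (edist_eq_one_iff_adj.mpr hm.symm)) (by norm_num)
    · have hi : i = 0 := Subsingleton.elim i 0
      subst hi
      exact H.irrefl hm
  · -- k = 2
    have fin2 : ∀ j : Fin 2, j = 0 ∨ j = 1 := by decide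
    by_cases hA : ∃ a : V, H.Adj (Sum.inr 0) (Sum.inl a)
    · by_cases hB : ∃ b : V, H.Adj (Sum.inr 1) (Sum.inl b)
      · obtain ⟨a, ha⟩ := hA
        obtain ⟨b, hb⟩ := hB
        by_cases hab : a = b
        · subst hab
          apply small a
          rintro (c | j)
          · exact L1 a c
          · rcases fin2 j with rfl | rfl
            · exact le_trans (le_of_eq (edist_eq_one_iff_adj.mpr ha.symm)) (by norm_num)
            · exact le_trans (le_of_eq (edist_eq_one_iff_adj.mpr hb.symm)) (by norm_num)
        by_cases hadj : G.Adj a b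
        · apply small a
          rintro (c | j)
          · exact L1 a c
          · rcases fin2 j with rfl | rfl
            · exact le_trans (le_of_eq (edist_eq_one_iff_adj.mpr ha.symm)) (by norm_num)
            · exact hle2 ((hind a b).mpr hadj) hb.symm
        · obtain ⟨m, hm1, hm2⟩ := hmid (heq2 (all2 a b) hab hadj)
          apply small m
          rintro (c | j)
          · exact L1 m c
          · rcases fin2 j with rfl | rfl
            · exact hle2 ((hind m a).mpr hm1.symm) ha.symm
            · exact hle2 ((hind m b).mpr hm2) hb.symm
      · obtain ⟨n, hn⟩ := getnb 1
        rcases n with b | i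
        · exact hB ⟨b, hn⟩
        · rcases fin2 i with rfl | rfl
          swap
          · exact H.irrefl hn
          · obtain ⟨a, ha⟩ := hA
            apply small a
            rintro (c | j)
            · exact L1 a c
            · rcases fin2 j with rfl | rfl
              · exact le_trans (le_of_eq (edist_eq_one_iff_adj.mpr ha.symm)) (by norm_num)
              · exact hle2 ha.symm hn.symm
    · obtain ⟨n, hn⟩ := getnb 0
      rcases n with a | i
      · exact hA ⟨a, hn⟩
      rcases fin2 i with rfl | rfl
      · exact H.irrefl hn
      by_cases hB : ∃ b : V, H.Adj (Sum.inr 1) (Sum.inl b)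
      · obtain ⟨b, hb⟩ := hB
        apply small b
        rintro (c | j)
        · exact L1 b c
        · rcases fin2 j with rfl | rfl
          · exact hle2 hb.symm hn.symm
          · exact le_trans (le_of_eq (edist_eq_one_iff_adj.mpr hb.symm)) (by norm_num)
      · have key : ∀ (p q : V ⊕ Fin 2) (w : H.Walk p q),
            (∃ i : Fin 2, p = Sum.inr i) → ∃ j : Fin 2, q = Sum.inr j := by
          intro p q w
          induction w with
          | nil => exact id
          | @cons p' m' q' h w ih =>
            rintro ⟨i, rfl⟩
            apply ih
            rcases m' with c | j
            · rcases fin2 i with rfl | rfl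
              · exact absurd ⟨c, h⟩ hA
              · exact absurd ⟨c, h⟩ hB
            · exact ⟨j, rfl⟩
        obtain ⟨w⟩ := hasc.1.preconnected (Sum.inr 0) (Sum.inl u0)
        obtain ⟨j, hj⟩ := key _ _ w ⟨0, rfl⟩
        simp at hj

/-! ### The main theorem -/

/-- If `G` has diameter 2 and contains vertices `u`, `v` of a diametrical triple such
that the subgraph induced by `Ecc(u) ∩ Ecc(v)` contains an isolated vertex, then
`θ_3(G) = 3`. -/
theorem theta_three_of_isolated_in_ecc {V : Type*} [Fintype V] (G : SimpleGraph V)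
    (hdiam : graphDiam G = 2)
    (u v w : V) (huv : u ≠ v) (huw : u ≠ w) (hvw : v ≠ w)
    (h1 : G.edist u v = graphDiam G) (h2 : G.edist u w = graphDiam G)
    (h3 : G.edist v w = graphDiam G)
    (x : V) (hx : x ∈ eccSet G u ∩ eccSet G v)
    (hiso : ∀ y ∈ eccSet G u ∩ eccSet G v, ¬ G.Adj x y) :
    theta 3 G = 3 := by
  classical
  have all2 : ∀ a b, G.edist a b ≤ 2 := by
    intro a b
    calc G.edist a b ≤ ecc G a := le_iSup (G.edist a) b
    _ ≤ graphDiam G := le_iSup (fun p => ecc G p) a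
    _ = 2 := hdiam
  have euv : G.edist u v = 2 := h1.trans hdiam
  have evu : G.edist v u = 2 := by rw [SimpleGraph.edist_comm]; exact euv
  have eccu : ecc G u = 2 := le_antisymm (iSup_le (all2 u)) (euv ▸ le_iSup (G.edist u) v)
  have eccv : ecc G v = 2 := le_antisymm (iSup_le (all2 v)) (evu ▸ le_iSup (G.edist v) u)
  have eux : G.edist u x = 2 := (hx.1 : G.edist u x = ecc G u).trans eccu
  have evx : G.edist v x = 2 := (hx.2 : G.edist v x = ecc G v).trans eccv
  have hiso' : ∀ y, G.edist u y = 2 → G.edist v y = 2 → ¬ G.Adj x y := by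
    intro y hy1 hy2
    exact hiso y ⟨(show G.edist u y = ecc G u from hy1.trans eccu.symm),
      (show G.edist v y = ecc G v from hy2.trans eccv.symm)⟩
  have mem3 : 3 ∈ {k : ℕ | ∃ H : SimpleGraph (V ⊕ Fin k), IsASC 3 H ∧
      ∀ a b : V, H.Adj (Sum.inl a) (Sum.inl b) ↔ G.Adj a b} :=
    ⟨HH G u v x, HH_isASC G u v x all2 euv eux evx hiso', fun a b => Iff.rfl⟩
  refine le_antisymm (Nat.sInf_le mem3) (le_csInf ⟨3, mem3⟩ ?_)
  rintro k ⟨H, hasc, hind⟩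
  by_contra hlt
  push_neg at hlt
  exact no_small G u all2 hlt H hasc hind

end AscPaper
end

section
/- For every integer n ≥ 9, the 3-ASC index of the path P_n satisfies θ_3(P_n) ≤ 2. -/
namespace AscPaper

open SimpleGraph Sum


-- ===== general edist helpers =====
section helpers
variable {V : Type*} {G : SimpleGraph V} {u v w : V} {k : ℕ}

lemma edist_le_one_of_adj (h : G.Adj u v) : G.edist u v ≤ 1 :=
  le_of_eq (edist_eq_one_iff_adj.mpr h)

lemma edist_le_succ_of_adj (h : G.Adj u w) (h2 : G.edist w v ≤ (k : ℕ∞)) :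
    G.edist u v ≤ ((k + 1 : ℕ) : ℕ∞) := by
  calc G.edist u v ≤ G.edist u w + G.edist w v := SimpleGraph.edist_triangle
    _ ≤ 1 + k := add_le_add (edist_le_one_of_adj h) h2
    _ = ((k + 1 : ℕ) : ℕ∞) := by push_cast; ring

lemma exists_adj_of_edist_le (h : G.edist u v ≤ ((k + 1 : ℕ) : ℕ∞)) (hne : u ≠ v) :
    ∃ w, G.Adj u w ∧ G.edist w v ≤ (k : ℕ∞) := by
  have htop : G.edist u v ≠ ⊤ := by
    intro ht; rw [ht] at h
    exact absurd (top_le_iff.mp h) (ENat.coe_ne_top _)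
  obtain ⟨p, hp⟩ := exists_walk_of_edist_ne_top htop
  cases p with
  | nil => exact absurd rfl hne
  | cons ha q =>
    refine ⟨_, ha, ?_⟩
    have hq : G.edist _ v ≤ q.length := edist_le q
    have hlen : ((q.length + 1 : ℕ) : ℕ∞) ≤ ((k + 1 : ℕ) : ℕ∞) := by
      rw [show ((q.length + 1 : ℕ) : ℕ∞) = ((q.cons ha).length : ℕ∞) by simp [Walk.length_cons]]
      rw [hp]; exact h
    have : q.length ≤ k := by exact_mod_cast Nat.succ_le_succ_iff.mp (by exact_mod_cast hlen)
    exact hq.trans (by exact_mod_cast this)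

lemma eq_or_adj_of_edist_le_one (h : G.edist u v ≤ (1 : ℕ∞)) : u = v ∨ G.Adj u v := by
  by_cases hne : u = v
  · exact Or.inl hne
  · obtain ⟨w, hw, hw0⟩ := exists_adj_of_edist_le (k := 0) (by exact_mod_cast h) hne
    have : w = v := by simpa using hw0
    exact Or.inr (this ▸ hw)

lemma le_coe_of_lt_coe_succ {d : ℕ∞} (h : d < ((k + 1 : ℕ) : ℕ∞)) : d ≤ (k : ℕ∞) := by
  lift d to ℕ using h.ne_top
  exact_mod_cast Nat.lt_succ_iff.mp (by exact_mod_cast h)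

lemma three_le_edist (hne : u ≠ v) (h1 : ¬ G.Adj u v)
    (h2 : ∀ w, G.Adj u w → G.Adj w v → False) : (3 : ℕ∞) ≤ G.edist u v := by
  by_contra hc
  push_neg at hc
  have hc2 : G.edist u v ≤ ((1 + 1 : ℕ) : ℕ∞) :=
    le_coe_of_lt_coe_succ (k := 2) (by exact_mod_cast hc)
  obtain ⟨w, hw, hw1⟩ := exists_adj_of_edist_le hc2 hne
  rcases eq_or_adj_of_edist_le_one (by exact_mod_cast hw1) with rfl | hA
  · exact h1 hw
  · exact h2 w hw hA

lemma four_le_edist (hne : u ≠ v)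
    (h2 : ∀ w, G.Adj u w → (3 : ℕ∞) ≤ G.edist w v) : (4 : ℕ∞) ≤ G.edist u v := by
  by_contra hc
  push_neg at hc
  have hc3 : G.edist u v ≤ ((2 + 1 : ℕ) : ℕ∞) :=
    le_coe_of_lt_coe_succ (k := 3) (by exact_mod_cast hc)
  obtain ⟨w, hw, hw2⟩ := exists_adj_of_edist_le hc3 hne
  have := h2 w hw
  have : (3 : ℕ∞) ≤ (2 : ℕ∞) := this.trans (by exact_mod_cast hw2)
  exact absurd this (by decide)

lemma ecc_eq_of {k : ℕ} (h1 : ∀ v, G.edist u v ≤ (k : ℕ∞))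
    (h2 : ∃ v, (k : ℕ∞) ≤ G.edist u v) : ecc G u = (k : ℕ∞) := by
  obtain ⟨v, hv⟩ := h2
  exact le_antisymm (iSup_le h1) (le_iSup_of_le v hv)

end helpers

-- ===== the construction =====
section constructionDef

variable {n : ℕ}

/-- Auxiliary relation for the 3-ASC extension of the path. -/
def pathRel (n : ℕ) : (Fin n ⊕ Fin 2) → (Fin n ⊕ Fin 2) → Prop
  | inl i, inl j => (i : ℕ) + 1 = (j : ℕ)
  | inl i, inr k => (k = 0 ∧ 3 ≤ (i : ℕ)) ∨
      (k = 1 ∧ ((i : ℕ) = 0 ∨ (4 ≤ (i : ℕ) ∧ (i : ℕ) + 2 ≤ n)))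
  | inr _, inl _ => False
  | inr k, inr l => k = 0 ∧ l = 1

/-- The 3-ASC graph extending the path `P_n` with two vertices. -/
def HG (n : ℕ) : SimpleGraph (Fin n ⊕ Fin 2) := SimpleGraph.fromRel (pathRel n)

lemma adj_inl_inl {i j : Fin n} :
    (HG n).Adj (inl i) (inl j) ↔ ((i : ℕ) + 1 = j ∨ (j : ℕ) + 1 = i) := by
  constructor
  · rintro ⟨-, h | h⟩
    · exact Or.inl h
    · exact Or.inr h
  · intro h
    refine ⟨?_, ?_⟩
    · intro he
      injection he with he
      rcases h with h | h <;> · rw [he] at h; omega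
    · rcases h with h | h
      · exact Or.inl h
      · exact Or.inr h

lemma adj_inl_a {i : Fin n} :
    (HG n).Adj (inl i) (inr 0) ↔ 3 ≤ (i : ℕ) := by
  constructor
  · rintro ⟨-, (⟨-, h⟩ | ⟨h1, -⟩) | h⟩
    · exact h
    · exact absurd h1 (by decide)
    · exact h.elim
  · intro h
    exact ⟨by simp, Or.inl (Or.inl ⟨rfl, h⟩)⟩

lemma adj_inl_b {i : Fin n} :
    (HG n).Adj (inl i) (inr 1) ↔ ((i : ℕ) = 0 ∨ (4 ≤ (i : ℕ) ∧ (i : ℕ) + 2 ≤ n)) := by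
  constructor
  · rintro ⟨-, (⟨h1, -⟩ | ⟨-, h⟩) | h⟩
    · exact absurd h1 (by decide)
    · exact h
    · exact h.elim
  · intro h
    exact ⟨by simp, Or.inl (Or.inr ⟨rfl, h⟩)⟩

lemma adj_a_b : (HG n).Adj (inr 0) (inr 1) :=
  ⟨by simp [Fin.ext_iff], Or.inl ⟨rfl, rfl⟩⟩

lemma adj_a_inl {i : Fin n} :
    (HG n).Adj (inr 0) (inl i) ↔ 3 ≤ (i : ℕ) := by
  rw [adj_comm]; exact adj_inl_a

lemma adj_b_inl {i : Fin n} :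
    (HG n).Adj (inr 1) (inl i) ↔ ((i : ℕ) = 0 ∨ (4 ≤ (i : ℕ) ∧ (i : ℕ) + 2 ≤ n)) := by
  rw [adj_comm]; exact adj_inl_b

/-- Inversion: classify neighbours of a path vertex. -/
lemma adj_inl_cases {i : Fin n} {w : Fin n ⊕ Fin 2} (h : (HG n).Adj (inl i) w) :
    (∃ j : Fin n, w = inl j ∧ ((i : ℕ) + 1 = j ∨ (j : ℕ) + 1 = i)) ∨
    (w = inr 0 ∧ 3 ≤ (i : ℕ)) ∨
    (w = inr 1 ∧ ((i : ℕ) = 0 ∨ (4 ≤ (i : ℕ) ∧ (i : ℕ) + 2 ≤ n))) := by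
  cases w with
  | inl j => exact Or.inl ⟨j, rfl, adj_inl_inl.mp h⟩
  | inr k =>
    have h2 : k = 0 ∨ k = 1 := by omega
    rcases h2 with rfl | rfl
    · exact Or.inr (Or.inl ⟨rfl, adj_inl_a.mp h⟩)
    · exact Or.inr (Or.inr ⟨rfl, adj_inl_b.mp h⟩)

end constructionDef

-- ===== distance computations =====
section distances

variable {n : ℕ} (hn : 9 ≤ n)
include hn

-- Upper bounds from hub a = inr 0
lemma edist_a_inl_le {i : Fin n} (h : (i : ℕ) ≠ 1) :
    (HG n).edist (inr 0) (inl i) ≤ ((2 : ℕ) : ℕ∞) := by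
  have hi := i.isLt
  rcases (show (i : ℕ) = 0 ∨ (i : ℕ) = 2 ∨ 3 ≤ (i : ℕ) from by omega) with h0 | h2 | h3
  · -- a - b - v0
    refine edist_le_succ_of_adj adj_a_b (edist_le_one_of_adj ?_)
    exact adj_b_inl.mpr (Or.inl h0)
  · -- a - v3 - v2
    refine edist_le_succ_of_adj (w := inl (⟨3, by omega⟩ : Fin n))
      (adj_a_inl.mpr (by simp)) (edist_le_one_of_adj ?_)
    exact adj_inl_inl.mpr (Or.inr (by simp [h2]))
  · exact le_trans (edist_le_one_of_adj (adj_a_inl.mpr h3)) (by exact_mod_cast one_le_two)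

lemma edist_a_le_three (v : Fin n ⊕ Fin 2) :
    (HG n).edist (inr 0) v ≤ ((3 : ℕ) : ℕ∞) := by
  cases v with
  | inl i =>
    by_cases h1 : (i : ℕ) = 1
    · -- a - v3 - v2 - v1
      refine edist_le_succ_of_adj (w := inl (⟨3, by omega⟩ : Fin n))
        (adj_a_inl.mpr (by simp)) ?_
      refine edist_le_succ_of_adj (w := inl (⟨2, by omega⟩ : Fin n))
        (adj_inl_inl.mpr (Or.inr (by simp))) (edist_le_one_of_adj ?_)
      exact adj_inl_inl.mpr (Or.inr (by simp [h1]))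
    · exact le_trans (edist_a_inl_le hn h1) (by exact_mod_cast (by omega : (2:ℕ) ≤ 3))
  | inr k =>
    rcases (show k = 0 ∨ k = 1 from by omega) with rfl | rfl
    · simp
    · exact le_trans (edist_le_one_of_adj adj_a_b) (by exact_mod_cast (by omega : (1:ℕ) ≤ 3))

-- Upper bounds from hub b = inr 1
lemma edist_b_inl_le {i : Fin n} (h : (i : ℕ) ≠ 2) :
    (HG n).edist (inr 1) (inl i) ≤ ((2 : ℕ) : ℕ∞) := by
  have hi := i.isLt
  rcases (show (i : ℕ) = 0 ∨ (i : ℕ) = 1 ∨ (i : ℕ) = 3 ∨ (4 ≤ (i : ℕ) ∧ (i : ℕ) + 2 ≤ n) ∨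
      (i : ℕ) = n - 1 from by omega) with h0 | h1 | h3 | ⟨h4, h4'⟩ | he
  · exact le_trans (edist_le_one_of_adj (adj_b_inl.mpr (Or.inl h0)))
      (by exact_mod_cast one_le_two)
  · -- b - v0 - v1
    refine edist_le_succ_of_adj (w := inl (⟨0, by omega⟩ : Fin n))
      (adj_b_inl.mpr (Or.inl (by simp))) (edist_le_one_of_adj ?_)
    exact adj_inl_inl.mpr (Or.inl (by simp [h1]))
  · -- b - v4 - v3
    refine edist_le_succ_of_adj (w := inl (⟨4, by omega⟩ : Fin n))
      (adj_b_inl.mpr (Or.inr (by simp; omega))) (edist_le_one_of_adj ?_)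
    exact adj_inl_inl.mpr (Or.inr (by simp [h3]))
  · exact le_trans (edist_le_one_of_adj (adj_b_inl.mpr (Or.inr ⟨h4, h4'⟩)))
      (by exact_mod_cast one_le_two)
  · -- b - v_{n-2} - v_{n-1}
    refine edist_le_succ_of_adj (w := inl (⟨n - 2, by omega⟩ : Fin n))
      (adj_b_inl.mpr (Or.inr (by simp; omega))) (edist_le_one_of_adj ?_)
    exact adj_inl_inl.mpr (Or.inl (by simp [he]; omega))

lemma edist_b_le_three (v : Fin n ⊕ Fin 2) :
    (HG n).edist (inr 1) v ≤ ((3 : ℕ) : ℕ∞) := by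
  cases v with
  | inl i =>
    by_cases h2 : (i : ℕ) = 2
    · -- b - a - v3 - v2
      refine edist_le_succ_of_adj adj_a_b.symm ?_
      refine edist_le_succ_of_adj (w := inl (⟨3, by omega⟩ : Fin n))
        (adj_a_inl.mpr (by simp)) (edist_le_one_of_adj ?_)
      exact adj_inl_inl.mpr (Or.inr (by simp [h2]))
    · exact le_trans (edist_b_inl_le hn h2) (by exact_mod_cast (by omega : (2:ℕ) ≤ 3))
  | inr k =>
    rcases (show k = 0 ∨ k = 1 from by omega) with rfl | rfl
    · exact le_trans (edist_le_one_of_adj adj_a_b.symm)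
        (by exact_mod_cast (by omega : (1:ℕ) ≤ 3))
    · simp

end distances


-- ===== lower bounds =====
section lowerBounds

variable {n : ℕ} (hn : 9 ≤ n)
include hn

/-- Neighbours of `v₁` are `v₀` and `v₂`. -/
lemma nbr_v1 {i : Fin n} (hi : (i : ℕ) = 1) {w : Fin n ⊕ Fin 2}
    (h : (HG n).Adj (inl i) w) : ∃ j : Fin n, w = inl j ∧ ((j : ℕ) = 0 ∨ (j : ℕ) = 2) := by
  rcases adj_inl_cases h with ⟨j, rfl, hj⟩ | ⟨-, h3⟩ | ⟨-, hb⟩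
  · exact ⟨j, rfl, by omega⟩
  · omega
  · omega

lemma nbr_v0 {i : Fin n} (hi : (i : ℕ) = 0) {w : Fin n ⊕ Fin 2}
    (h : (HG n).Adj (inl i) w) :
    (∃ j : Fin n, w = inl j ∧ (j : ℕ) = 1) ∨ w = inr 1 := by
  rcases adj_inl_cases h with ⟨j, rfl, hj⟩ | ⟨-, h3⟩ | ⟨hw, -⟩
  · exact Or.inl ⟨j, rfl, by omega⟩
  · omega
  · exact Or.inr hw

lemma nbr_v2 {i : Fin n} (hi : (i : ℕ) = 2) {w : Fin n ⊕ Fin 2}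
    (h : (HG n).Adj (inl i) w) : ∃ j : Fin n, w = inl j ∧ ((j : ℕ) = 1 ∨ (j : ℕ) = 3) := by
  rcases adj_inl_cases h with ⟨j, rfl, hj⟩ | ⟨-, h3⟩ | ⟨-, hb⟩
  · exact ⟨j, rfl, by omega⟩
  · omega
  · omega

/-- v₁ is at distance ≥ 3 from hub a. -/
lemma L1 {i : Fin n} (hi : (i : ℕ) = 1) :
    (3 : ℕ∞) ≤ (HG n).edist (inl i) (inr 0) := by
  refine three_le_edist (by simp) (fun h => by have := adj_inl_a.mp h; omega) ?_
  intro w hw hwa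
  obtain ⟨j, rfl, hj⟩ := nbr_v1 hn hi hw
  have := adj_inl_a.mp hwa
  omega

/-- v₂ is at distance ≥ 3 from hub b. -/
lemma L2 {i : Fin n} (hi : (i : ℕ) = 2) :
    (3 : ℕ∞) ≤ (HG n).edist (inl i) (inr 1) := by
  refine three_le_edist (by simp) (fun h => by have := adj_inl_b.mp h; omega) ?_
  intro w hw hwb
  obtain ⟨j, rfl, hj⟩ := nbr_v2 hn hi hw
  have := adj_inl_b.mp hwb
  omega

/-- v₀ is at distance ≥ 3 from v₃. -/
lemma L3 {i j : Fin n} (hi : (i : ℕ) = 0) (hj : (j : ℕ) = 3) :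
    (3 : ℕ∞) ≤ (HG n).edist (inl i) (inl j) := by
  refine three_le_edist (by simp [Fin.ext_iff]; omega)
    (fun h => by rcases adj_inl_inl.mp h with h | h <;> omega) ?_
  intro w hw hwj
  rcases nbr_v0 hn hi hw with ⟨j', rfl, hj'⟩ | rfl
  · rcases adj_inl_inl.mp hwj with h | h <;> omega
  · have := adj_b_inl.mp hwj; omega

/-- v₁ is at distance ≥ 3 from every vⱼ with j ≥ 4. -/
lemma L4 {i j : Fin n} (hi : (i : ℕ) = 1) (hj : 4 ≤ (j : ℕ)) :
    (3 : ℕ∞) ≤ (HG n).edist (inl i) (inl j) := by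
  refine three_le_edist (by simp [Fin.ext_iff]; omega)
    (fun h => by rcases adj_inl_inl.mp h with h | h <;> omega) ?_
  intro w hw hwj
  obtain ⟨j', rfl, hj'⟩ := nbr_v1 hn hi hw
  rcases adj_inl_inl.mp hwj with h | h <;> omega

/-- v₁ is at distance ≥ 4 from v_{n-1}. -/
lemma L5 {i j : Fin n} (hi : (i : ℕ) = 1) (hj : (j : ℕ) = n - 1) :
    (4 : ℕ∞) ≤ (HG n).edist (inl i) (inl j) := by
  refine four_le_edist (by simp [Fin.ext_iff]; omega) ?_
  intro w hw
  obtain ⟨j', rfl, hj'⟩ := nbr_v1 hn hi hw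
  rcases hj' with h0 | h2
  · -- w = v₀ : distance to v_{n-1} is at least 3
    refine three_le_edist (by simp [Fin.ext_iff]; omega)
      (fun h => by rcases adj_inl_inl.mp h with h | h <;> omega) ?_
    intro w' hw' hw'j
    rcases nbr_v0 hn h0 hw' with ⟨j'', rfl, hj''⟩ | rfl
    · rcases adj_inl_inl.mp hw'j with h | h <;> omega
    · have := adj_b_inl.mp hw'j; omega
  · -- w = v₂ : distance to v_{n-1} is at least 3
    refine three_le_edist (by simp [Fin.ext_iff]; omega)
      (fun h => by rcases adj_inl_inl.mp h with h | h <;> omega) ?_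
    intro w' hw' hw'j
    obtain ⟨j'', rfl, hj''⟩ := nbr_v2 hn h2 hw'
    rcases adj_inl_inl.mp hw'j with h | h <;> omega

end lowerBounds


-- ===== eccentricities =====
section eccentricities

variable {n : ℕ} (hn : 9 ≤ n)
include hn

lemma ecc_a : ecc (HG n) (inr 0) = ((3 : ℕ) : ℕ∞) := by
  refine ecc_eq_of (edist_a_le_three hn) ⟨inl (⟨1, by omega⟩ : Fin n), ?_⟩
  rw [SimpleGraph.edist_comm]
  exact_mod_cast L1 hn (by simp)

lemma ecc_b : ecc (HG n) (inr 1) = ((3 : ℕ) : ℕ∞) := by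
  refine ecc_eq_of (edist_b_le_three hn) ⟨inl (⟨2, by omega⟩ : Fin n), ?_⟩
  rw [SimpleGraph.edist_comm]
  exact_mod_cast L2 hn (by simp)

lemma edist_v0_le_three {i : Fin n} (hi : (i : ℕ) = 0) (v : Fin n ⊕ Fin 2) :
    (HG n).edist (inl i) v ≤ ((3 : ℕ) : ℕ∞) := by
  have hadjb : (HG n).Adj (inl i) (inr 1) := adj_inl_b.mpr (Or.inl hi)
  cases v with
  | inl j =>
    by_cases h2 : (j : ℕ) = 2
    · -- v0 - v1 - v2
      refine le_trans (edist_le_succ_of_adj (w := inl (⟨1, by omega⟩ : Fin n))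
        (adj_inl_inl.mpr (Or.inl (by simp [hi])))
        (edist_le_one_of_adj (adj_inl_inl.mpr (Or.inl (by simp [h2])))))
        (by exact_mod_cast (by omega : (2:ℕ) ≤ 3))
    · exact edist_le_succ_of_adj hadjb (edist_b_inl_le hn h2)
  | inr k =>
    rcases (show k = 0 ∨ k = 1 from by omega) with rfl | rfl
    · exact le_trans (edist_le_succ_of_adj hadjb (edist_le_one_of_adj adj_a_b.symm))
        (by exact_mod_cast (by omega : (2:ℕ) ≤ 3))
    · exact le_trans (edist_le_one_of_adj hadjb)
        (by exact_mod_cast (by omega : (1:ℕ) ≤ 3))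

lemma ecc_v0 {i : Fin n} (hi : (i : ℕ) = 0) : ecc (HG n) (inl i) = ((3 : ℕ) : ℕ∞) := by
  refine ecc_eq_of (edist_v0_le_three hn hi) ⟨inl (⟨3, by omega⟩ : Fin n), ?_⟩
  exact_mod_cast L3 hn hi (by simp)

lemma ecc_v1 {i : Fin n} (hi : (i : ℕ) = 1) : ecc (HG n) (inl i) = ((4 : ℕ) : ℕ∞) := by
  refine ecc_eq_of ?_ ⟨inl (⟨n - 1, by omega⟩ : Fin n), ?_⟩
  · intro v
    refine edist_le_succ_of_adj (w := inl (⟨0, by omega⟩ : Fin n))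
      (adj_inl_inl.mpr (Or.inr (by simp [hi]))) (edist_v0_le_three hn (by simp) v)
  · exact_mod_cast L5 hn hi (by simp)

lemma ecc_v2 {i : Fin n} (hi : (i : ℕ) = 2) : ecc (HG n) (inl i) = ((3 : ℕ) : ℕ∞) := by
  have hadj3 : (HG n).Adj (inl i) (inl (⟨3, by omega⟩ : Fin n)) :=
    adj_inl_inl.mpr (Or.inl (by simp [hi]))
  have hadj3a : (HG n).Adj (inl (⟨3, by omega⟩ : Fin n)) (inr 0) :=
    adj_inl_a.mpr (by simp)
  refine ecc_eq_of ?_ ⟨inr 1, ?_⟩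
  · intro v
    cases v with
    | inl j =>
      have hj := j.isLt
      rcases (show (j : ℕ) = 0 ∨ (j : ℕ) = 1 ∨ (j : ℕ) = 2 ∨ 3 ≤ (j : ℕ) from by omega)
        with h0 | h1 | h2 | h3
      · -- v2 - v1 - v0
        refine le_trans (edist_le_succ_of_adj (w := inl (⟨1, by omega⟩ : Fin n))
          (adj_inl_inl.mpr (Or.inr (by simp [hi])))
          (edist_le_one_of_adj (adj_inl_inl.mpr (Or.inr (by simp [h0])))))
          (by exact_mod_cast (by omega : (2:ℕ) ≤ 3))
      · exact le_trans (edist_le_one_of_adj (adj_inl_inl.mpr (Or.inr (by simp [hi, h1]))))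
          (by exact_mod_cast (by omega : (1:ℕ) ≤ 3))
      · have : inl (α := Fin n) i = inl (β := Fin 2) j := by
          simp [Fin.ext_iff]; omega
        rw [this]; simp
      · -- v2 - v3 - a - vj
        exact edist_le_succ_of_adj hadj3
          (edist_le_succ_of_adj hadj3a (edist_le_one_of_adj (adj_a_inl.mpr h3)))
    | inr k =>
      rcases (show k = 0 ∨ k = 1 from by omega) with rfl | rfl
      · exact le_trans (edist_le_succ_of_adj hadj3 (edist_le_one_of_adj hadj3a))
          (by exact_mod_cast (by omega : (2:ℕ) ≤ 3))
      · exact edist_le_succ_of_adj hadj3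
          (edist_le_succ_of_adj hadj3a (edist_le_one_of_adj adj_a_b))
  · exact_mod_cast L2 hn hi

lemma ecc_v3 {i : Fin n} (hi : (i : ℕ) = 3) : ecc (HG n) (inl i) = ((3 : ℕ) : ℕ∞) := by
  have hadja : (HG n).Adj (inl i) (inr 0) := adj_inl_a.mpr (by omega)
  refine ecc_eq_of ?_ ⟨inl (⟨0, by omega⟩ : Fin n), ?_⟩
  · intro v
    cases v with
    | inl j =>
      have hj := j.isLt
      rcases (show (j : ℕ) = 0 ∨ (j : ℕ) = 1 ∨ (j : ℕ) = 2 ∨ 3 ≤ (j : ℕ) from by omega)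
        with h0 | h1 | h2 | h3
      · -- v3 - v2 - v1 - v0
        refine edist_le_succ_of_adj (w := inl (⟨2, by omega⟩ : Fin n))
          (adj_inl_inl.mpr (Or.inr (by simp [hi]))) ?_
        refine le_trans (edist_le_succ_of_adj (w := inl (⟨1, by omega⟩ : Fin n))
          (adj_inl_inl.mpr (Or.inr (by simp)))
          (edist_le_one_of_adj (adj_inl_inl.mpr (Or.inr (by simp [h0])))))
          (le_refl _)
      · -- v3 - v2 - v1
        refine le_trans (edist_le_succ_of_adj (w := inl (⟨2, by omega⟩ : Fin n))
          (adj_inl_inl.mpr (Or.inr (by simp [hi])))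
          (edist_le_one_of_adj (adj_inl_inl.mpr (Or.inr (by simp [h1])))))
          (by exact_mod_cast (by omega : (2:ℕ) ≤ 3))
      · exact le_trans (edist_le_one_of_adj (adj_inl_inl.mpr (Or.inr (by omega))))
          (by exact_mod_cast (by omega : (1:ℕ) ≤ 3))
      · exact le_trans (edist_le_succ_of_adj hadja (edist_le_one_of_adj (adj_a_inl.mpr h3)))
          (by exact_mod_cast (by omega : (2:ℕ) ≤ 3))
    | inr k =>
      rcases (show k = 0 ∨ k = 1 from by omega) with rfl | rfl
      · exact le_trans (edist_le_one_of_adj hadja)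
          (by exact_mod_cast (by omega : (1:ℕ) ≤ 3))
      · exact le_trans (edist_le_succ_of_adj hadja (edist_le_one_of_adj adj_a_b))
          (by exact_mod_cast (by omega : (2:ℕ) ≤ 3))
  · rw [SimpleGraph.edist_comm]
    exact_mod_cast L3 hn (by simp) hi

lemma ecc_vmid {i : Fin n} (h4 : 4 ≤ (i : ℕ)) (h2 : (i : ℕ) + 2 ≤ n) :
    ecc (HG n) (inl i) = ((3 : ℕ) : ℕ∞) := by
  have hadja : (HG n).Adj (inl i) (inr 0) := adj_inl_a.mpr (by omega)
  have hadjb : (HG n).Adj (inl i) (inr 1) := adj_inl_b.mpr (Or.inr ⟨h4, h2⟩)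
  refine ecc_eq_of ?_ ⟨inl (⟨1, by omega⟩ : Fin n), ?_⟩
  · intro v
    cases v with
    | inl j =>
      by_cases hj2 : (j : ℕ) = 2
      · exact edist_le_succ_of_adj hadja (edist_a_inl_le hn (by omega))
      · exact edist_le_succ_of_adj hadjb (edist_b_inl_le hn hj2)
    | inr k =>
      rcases (show k = 0 ∨ k = 1 from by omega) with rfl | rfl
      · exact le_trans (edist_le_one_of_adj hadja)
          (by exact_mod_cast (by omega : (1:ℕ) ≤ 3))
      · exact le_trans (edist_le_one_of_adj hadjb)
          (by exact_mod_cast (by omega : (1:ℕ) ≤ 3))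
  · rw [SimpleGraph.edist_comm]
    exact_mod_cast L4 hn (by simp) (by omega)

lemma ecc_vend {i : Fin n} (hi : (i : ℕ) = n - 1) :
    ecc (HG n) (inl i) = ((4 : ℕ) : ℕ∞) := by
  have hadja : (HG n).Adj (inl i) (inr 0) := adj_inl_a.mpr (by omega)
  refine ecc_eq_of ?_ ⟨inl (⟨1, by omega⟩ : Fin n), ?_⟩
  · intro v
    exact edist_le_succ_of_adj hadja (edist_a_le_three hn v)
  · rw [SimpleGraph.edist_comm]
    exact_mod_cast L5 hn (by simp) hi

end eccentricities


-- ===== assembly =====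
section assembly

variable {n : ℕ} (hn : 9 ≤ n)
include hn

lemma ecc_classification (u : Fin n ⊕ Fin 2) :
    (ecc (HG n) u = ((3 : ℕ) : ℕ∞) ∧
      (∀ i : Fin n, u = inl i → (i : ℕ) ≠ 1 ∧ (i : ℕ) ≠ n - 1)) ∨
    (ecc (HG n) u = ((4 : ℕ) : ℕ∞) ∧
      (∃ i : Fin n, u = inl i ∧ ((i : ℕ) = 1 ∨ (i : ℕ) = n - 1))) := by
  cases u with
  | inl i =>
    have hi := i.isLt
    rcases (show (i : ℕ) = 0 ∨ (i : ℕ) = 1 ∨ (i : ℕ) = 2 ∨ (i : ℕ) = 3 ∨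
        (4 ≤ (i : ℕ) ∧ (i : ℕ) + 2 ≤ n) ∨ (i : ℕ) = n - 1 from by omega)
      with h | h | h | h | ⟨h, h'⟩ | h
    · exact Or.inl ⟨ecc_v0 hn h, fun j hj => by injection hj with hj; subst hj; omega⟩
    · exact Or.inr ⟨ecc_v1 hn h, i, rfl, Or.inl h⟩
    · exact Or.inl ⟨ecc_v2 hn h, fun j hj => by injection hj with hj; subst hj; omega⟩
    · exact Or.inl ⟨ecc_v3 hn h, fun j hj => by injection hj with hj; subst hj; omega⟩
    · exact Or.inl ⟨ecc_vmid hn h h', fun j hj => by injection hj with hj; subst hj; omega⟩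
    · exact Or.inr ⟨ecc_vend hn h, i, rfl, Or.inr h⟩
  | inr k =>
    rcases (show k = 0 ∨ k = 1 from by omega) with rfl | rfl
    · exact Or.inl ⟨ecc_a hn, fun j hj => by simp at hj⟩
    · exact Or.inl ⟨ecc_b hn, fun j hj => by simp at hj⟩

lemma radius_HG : graphRadius (HG n) = ((3 : ℕ) : ℕ∞) := by
  apply le_antisymm
  · exact iInf_le_of_le (inr 0) (le_of_eq (ecc_a hn))
  · refine le_iInf fun u => ?_
    rcases ecc_classification hn u with ⟨h, -⟩ | ⟨h, -⟩
    · exact le_of_eq h.symm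
    · rw [h]; exact_mod_cast (by omega : (3:ℕ) ≤ 4)

lemma noncentral_set :
    {u : Fin n ⊕ Fin 2 | ecc (HG n) u ≠ graphRadius (HG n)} =
      {inl (⟨1, by omega⟩ : Fin n), inl (⟨n - 1, by omega⟩ : Fin n)} := by
  rw [radius_HG hn]
  ext u
  simp only [Set.mem_setOf_eq, Set.mem_insert_iff, Set.mem_singleton_iff]
  constructor
  · intro hne
    rcases ecc_classification hn u with ⟨h, -⟩ | ⟨-, i, rfl, hi⟩
    · exact absurd h hne
    · rcases hi with h1 | h1
      · exact Or.inl (by simp [Fin.ext_iff, h1])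
      · exact Or.inr (by simp [Fin.ext_iff, h1])
  · rintro (rfl | rfl)
    · rw [ecc_v1 hn (by simp)]
      intro h
      exact absurd (by exact_mod_cast h : (4:ℕ) = 3) (by omega)
    · rw [ecc_vend hn (by simp)]
      intro h
      exact absurd (by exact_mod_cast h : (4:ℕ) = 3) (by omega)

lemma connected_HG : (HG n).Connected := by
  rw [connected_iff]
  refine ⟨fun u v => ?_, ⟨inr 0⟩⟩
  have r : ∀ w, (HG n).Reachable (inr 0) w := fun w =>
    reachable_of_edist_ne_top (ne_top_of_le_ne_top (ENat.coe_ne_top 3) (edist_a_le_three hn w))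
  exact (r u).symm.trans (r v)

lemma isASC_HG : IsASC 3 (HG n) := by
  refine ⟨connected_HG hn, ?_, ?_⟩
  · rw [radius_HG hn]
  · rw [noncentral_set hn]
    rw [Set.ncard_pair (by simp [Fin.ext_iff]; omega)]

end assembly

/-- For every integer `n ≥ 9`, the 3-ASC index of the path `P_n` satisfies
`θ_3(P_n) ≤ 2`. -/
theorem theta_three_path_le (n : ℕ) (hn : 9 ≤ n) :
    theta 3 (pathGraph n) ≤ 2 := by
  apply Nat.sInf_le
  refine ⟨HG n, isASC_HG hn, fun u v => ?_⟩
  rw [adj_inl_inl, pathGraph_adj]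

end AscPaper
end
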